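/- The family of (s₀)-sets is a σ-ideal: it contains all subsets of its members and is closed under countable unions. (The countable union case uses a fusion argument on perfect sets.) -/
import Mathlib

/-- A perfect set: nonempty, closed, without isolated points. -/
def IsPerfectSet (P : Set ℝ) : Prop := Perfect P ∧ P.Nonempty

/-- An (s)-set (Marczewski measurable set). -/
def IsSSet (A : Set ℝ) : Prop :=
  ∀ P : Set ℝ, IsPerfectSet P →
    ∃ P' : Set ℝ, IsPerfectSet P' ∧ P' ⊆ P ∧ (P' ⊆ A ∩ P ∨ P' ⊆ P \ A)

/-- An (s₀)-set (Marczewski null set). -/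
def IsS0Set (A : Set ℝ) : Prop :=
  ∀ P : Set ℝ, IsPerfectSet P →
    ∃ P' : Set ℝ, IsPerfectSet P' ∧ P' ⊆ P ∧ P' ∩ A = ∅

open Set Metric

namespace S0Aux

/-- A good pair of children of `C` at stage `n`. -/
def GoodPair (f : ℕ → Set ℝ) (n : ℕ) (C : Set ℝ) (D : Bool → Set ℝ) : Prop :=
  (∀ b, IsPerfectSet (D b) ∧ D b ⊆ C ∧ D b ∩ f n = ∅ ∧ IsCompact (D b) ∧
    ∃ x, D b ⊆ Metric.closedBall x ((1/2 : ℝ) ^ n)) ∧ Disjoint (D false) (D true)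

/-- Shrink a perfect set to a small compact perfect subset avoiding `f n`. -/
lemma shrink {f : ℕ → Set ℝ} {n : ℕ} (hfn : IsS0Set (f n)) (E : Set ℝ)
    (hE : IsPerfectSet E) :
    ∃ D, IsPerfectSet D ∧ D ⊆ E ∧ D ∩ f n = ∅ ∧ IsCompact D ∧
      ∃ x, D ⊆ Metric.closedBall x ((1/2 : ℝ) ^ n) := by
  obtain ⟨D, hD, hDE, hDf⟩ := hfn E hE
  obtain ⟨x, hx⟩ := hD.2
  have rpos : (0:ℝ) < (1/2 : ℝ) ^ n := by positivity
  obtain ⟨hP, hne⟩ := hD.1.closure_nhds_inter x hx (Metric.mem_ball_self rpos) Metric.isOpen_ball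
  have hsubD : closure (Metric.ball x ((1/2:ℝ)^n) ∩ D) ⊆ D := by
    calc closure (Metric.ball x ((1/2:ℝ)^n) ∩ D) ⊆ closure D :=
          closure_mono inter_subset_right
      _ = D := hD.1.closed.closure_eq
  have hball : closure (Metric.ball x ((1/2:ℝ)^n) ∩ D) ⊆ Metric.closedBall x ((1/2:ℝ)^n) := by
    calc closure (Metric.ball x ((1/2:ℝ)^n) ∩ D) ⊆ closure (Metric.ball x ((1/2:ℝ)^n)) :=
          closure_mono inter_subset_left
      _ ⊆ Metric.closedBall x ((1/2:ℝ)^n) := closure_ball_subset_closedBall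
  refine ⟨closure (Metric.ball x ((1/2:ℝ)^n) ∩ D), ⟨hP, hne⟩, hsubD.trans hDE, ?_, ?_, x, hball⟩
  · apply Set.eq_empty_of_subset_empty
    rw [← hDf]
    exact Set.inter_subset_inter_left _ hsubD
  · exact isCompact_of_isClosed_isBounded isClosed_closure
      (Metric.isBounded_closedBall.subset hball)

lemma exists_goodPair {f : ℕ → Set ℝ} (n : ℕ) (hfn : IsS0Set (f n)) (C : Set ℝ)
    (hC : IsPerfectSet C) : ∃ D, GoodPair f n C D := by
  obtain ⟨C₀, C₁, ⟨p0, ne0, s0⟩, ⟨p1, ne1, s1⟩, dis⟩ := hC.1.splitting hC.2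
  obtain ⟨D₀, hD₀, hD₀C, h0f, h0c, h0b⟩ := shrink hfn C₀ ⟨p0, ne0⟩
  obtain ⟨D₁, hD₁, hD₁C, h1f, h1c, h1b⟩ := shrink hfn C₁ ⟨p1, ne1⟩
  refine ⟨fun b => if b then D₁ else D₀, fun b => ?_, ?_⟩
  · cases b
    · exact ⟨hD₀, hD₀C.trans s0, h0f, h0c, h0b⟩
    · exact ⟨hD₁, hD₁C.trans s1, h1f, h1c, h1b⟩
  · simpa using dis.mono hD₀C hD₁C

open Classical in
noncomputable def pairF (f : ℕ → Set ℝ) (n : ℕ) (C : Set ℝ) : Bool → Set ℝ :=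
  if h : ∃ D, GoodPair f n C D then h.choose else fun _ => C

lemma pairF_spec {f : ℕ → Set ℝ} {n : ℕ} (hfn : IsS0Set (f n)) {C : Set ℝ}
    (hC : IsPerfectSet C) : GoodPair f n C (pairF f n C) := by
  rw [pairF, dif_pos (exists_goodPair n hfn C hC)]
  exact (exists_goodPair n hfn C hC).choose_spec

/-- The fusion scheme. -/
noncomputable def QF (f : ℕ → Set ℝ) (P : Set ℝ) : (n : ℕ) → (Fin n → Bool) → Set ℝ
  | 0, _ => P
  | (n+1), v => pairF f n (QF f P n (Fin.init v)) (v (Fin.last n))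

variable {f : ℕ → Set ℝ} {P : Set ℝ} (hf : ∀ n, IsS0Set (f n)) (hP : IsPerfectSet P)

include hf hP

lemma QF_perfect : ∀ n (v : Fin n → Bool), IsPerfectSet (QF f P n v) := by
  intro n
  induction n with
  | zero => intro _; exact hP
  | succ n ih =>
    intro v
    exact ((pairF_spec (hf n) (ih (Fin.init v))).1 (v (Fin.last n))).1

lemma QF_spec (n : ℕ) (v : Fin (n+1) → Bool) :
    IsPerfectSet (QF f P (n+1) v) ∧ QF f P (n+1) v ⊆ QF f P n (Fin.init v) ∧
    QF f P (n+1) v ∩ f n = ∅ ∧ IsCompact (QF f P (n+1) v) ∧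
    ∃ x, QF f P (n+1) v ⊆ Metric.closedBall x ((1/2 : ℝ) ^ n) :=
  (pairF_spec (hf n) (QF_perfect hf hP n (Fin.init v))).1 (v (Fin.last n))

lemma QF_sibling (n : ℕ) (v w : Fin (n+1) → Bool) (hinit : Fin.init v = Fin.init w)
    (hlast : v (Fin.last n) ≠ w (Fin.last n)) :
    Disjoint (QF f P (n+1) v) (QF f P (n+1) w) := by
  have hd := (pairF_spec (hf n) (QF_perfect hf hP n (Fin.init v))).2
  show Disjoint (pairF f n (QF f P n (Fin.init v)) (v (Fin.last n)))
    (pairF f n (QF f P n (Fin.init w)) (w (Fin.last n)))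
  rw [← hinit]
  cases hb : v (Fin.last n) <;> cases hc : w (Fin.last n) <;>
    simp [hb, hc] at hlast ⊢
  · exact hd
  · exact hd.symm

omit hf hP in
lemma restrict_init (x : ℕ → Bool) (n : ℕ) :
    Fin.init (fun i : Fin (n+1) => x i) = fun i : Fin n => x i := by
  funext i
  simp [Fin.init]

/-- Along any branch, the intersection is nonempty. -/
lemma exists_branch (x : ℕ → Bool) :
    ∃ y, ∀ n, y ∈ QF f P n (fun i : Fin n => x i) := by
  set B : ℕ → Set ℝ := fun n => QF f P (n+1) (fun i : Fin (n+1) => x i) with hB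
  have hsub : ∀ n, B (n+1) ⊆ B n := by
    intro n
    have := (QF_spec hf hP (n+1) (fun i : Fin (n+2) => x i)).2.1
    rwa [restrict_init] at this
  have hne : ∀ n, (B n).Nonempty := fun n => (QF_perfect hf hP (n+1) _).2
  have hcl : ∀ n, IsClosed (B n) := fun n => (QF_perfect hf hP (n+1) _).1.closed
  have hc : IsCompact (B 0) := (QF_spec hf hP 0 _).2.2.2.1
  obtain ⟨y, hy⟩ :=
    IsCompact.nonempty_iInter_of_sequence_nonempty_isCompact_isClosed B hsub hne hc hcl
  rw [Set.mem_iInter] at hy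
  refine ⟨y, fun n => ?_⟩
  cases n with
  | zero => exact (QF_spec hf hP 0 (fun i : Fin 1 => x i)).2.1 (hy 0)
  | succ n => exact hy n

/-- The fusion limit set. -/
lemma fusion : ∃ P' : Set ℝ, IsPerfectSet P' ∧ P' ⊆ P ∧ P' ∩ (⋃ n, f n) = ∅ := by
  set P' : Set ℝ := ⋂ n, ⋃ v : Fin n → Bool, QF f P n v with hP'
  have hbranch : ∀ x : ℕ → Bool, ∃ y ∈ P', ∀ n, y ∈ QF f P n (fun i : Fin n => x i) := by
    intro x
    obtain ⟨y, hy⟩ := exists_branch hf hP x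
    exact ⟨y, Set.mem_iInter.2 fun n => Set.mem_iUnion.2 ⟨_, hy n⟩, hy⟩
  have hclosed : IsClosed P' :=
    isClosed_iInter fun n => isClosed_iUnion_of_finite
      fun v => (QF_perfect hf hP n v).1.closed
  have hne : P'.Nonempty := by
    obtain ⟨y, hy, -⟩ := hbranch fun _ => false
    exact ⟨y, hy⟩
  have hsubP : P' ⊆ P := fun y hy => by
    have := Set.mem_iInter.1 hy 0
    obtain ⟨v, hv⟩ := Set.mem_iUnion.1 this
    exact hv
  have hacc : Preperfect P' := by
    intro y hy
    rw [accPt_iff_nhds]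
    intro U hU
    obtain ⟨ε, hε, hball⟩ := Metric.mem_nhds_iff.1 hU
    obtain ⟨m, hm⟩ := exists_pow_lt_of_lt_one (half_pos hε) (by norm_num : (1/2:ℝ) < 1)
    -- y is in some node at level m+2
    obtain ⟨v, hv⟩ := Set.mem_iUnion.1 (Set.mem_iInter.1 hy (m+2))
    -- the sibling node
    set w : Fin (m+2) → Bool := Fin.snoc (Fin.init v) (! v (Fin.last (m+1))) with hw
    -- a branch through w
    set x : ℕ → Bool := fun i => if h : i < m+2 then w ⟨i, h⟩ else false with hx
    have hxw : (fun i : Fin (m+2) => x i) = w := by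
      funext i
      simp only [hx, i.isLt, dif_pos, Fin.eta]
    obtain ⟨y', hy'P, hy'⟩ := hbranch x
    have hy'w : y' ∈ QF f P (m+2) w := by rw [← hxw]; exact hy' (m+2)
    have hdisj : Disjoint (QF f P (m+2) v) (QF f P (m+2) w) := by
      apply QF_sibling hf hP
      · rw [hw, Fin.init_snoc]
      · rw [hw, Fin.snoc_last]; exact (Bool.not_ne_self _).symm
    have hne' : y' ≠ y := by
      intro h
      exact (hdisj.ne_of_mem hv hy'w) h.symm
    -- both y and y' lie in the level-(m+1) node above v, of radius (1/2)^m
    have hyv' : y ∈ QF f P (m+1) (Fin.init v) := (QF_spec hf hP (m+1) v).2.1 hv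
    have hy'v : y' ∈ QF f P (m+1) (Fin.init v) := by
      have := (QF_spec hf hP (m+1) w).2.1 hy'w
      rwa [hw, Fin.init_snoc] at this
    obtain ⟨z, hz⟩ := (QF_spec hf hP m (Fin.init v)).2.2.2.2
    have hdist : dist y' y < ε := by
      have h1 := Metric.mem_closedBall.1 (hz hyv')
      have h2 := Metric.mem_closedBall.1 (hz hy'v)
      calc dist y' y ≤ dist y' z + dist z y := dist_triangle _ _ _
        _ = dist y' z + dist y z := by rw [dist_comm z y]
        _ ≤ (1/2:ℝ)^m + (1/2:ℝ)^m := add_le_add h2 h1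
        _ < ε/2 + ε/2 := add_lt_add hm hm
        _ = ε := add_halves ε
    exact ⟨y', ⟨hball hdist, hy'P⟩, hne'⟩
  refine ⟨P', ⟨⟨hclosed, hacc⟩, hne⟩, hsubP, ?_⟩
  apply Set.eq_empty_of_subset_empty
  rintro y ⟨hyP', hyU⟩
  obtain ⟨n, hn⟩ := Set.mem_iUnion.1 hyU
  obtain ⟨v, hv⟩ := Set.mem_iUnion.1 (Set.mem_iInter.1 hyP' (n+1))
  have := (QF_spec hf hP n v).2.2.1
  rw [Set.eq_empty_iff_forall_notMem] at this
  exact this y ⟨hv, hn⟩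

end S0Aux

theorem s0_sigma_ideal :
    (∀ A B : Set ℝ, IsS0Set A → B ⊆ A → IsS0Set B) ∧
    (∀ f : ℕ → Set ℝ, (∀ n, IsS0Set (f n)) → IsS0Set (⋃ n, f n)) := by
  constructor
  · intro A B hA hBA Q hQ
    obtain ⟨P', hP', hsub, hint⟩ := hA Q hQ
    refine ⟨P', hP', hsub, ?_⟩
    apply Set.eq_empty_of_subset_empty
    rw [← hint]
    exact Set.inter_subset_inter_right _ hBA
  · intro f hf Q hQ
    obtain ⟨P', hP', hsub, hint⟩ := S0Aux.fusion hf hQ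
    exact ⟨P', hP', hsub, hint⟩
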